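/- Let (p_t)_{t ∈ (0,2T]} be probability densities on ℝ^d in C²(ℝ^d) satisfying the convolution semigroup property p_{s+t} = p_s ⋆ p_t for s, t, s+t ∈ (0,2T], and define P_t φ(x) := ∫_{ℝ^d} φ(x+y) p_t(y) dy for bounded Borel measurable φ. Let c : (0,T] → [0,∞). If for all t ∈ (0,T], all bounded Borel measurable φ and all i ∈ {1,…,d} the function P_t φ is partially differentiable with ‖∂_{x_i} P_t φ‖_∞ ≤ c(t) ‖φ‖_∞, then for all t ∈ (0,T], all bounded Borel measurable φ and all i, k ∈ {1,…,d} the second partial derivative ∂_{x_i} ∂_{x_k} P_{2t} φ exists and ‖∂_{x_i} ∂_{x_k} P_{2t} φ‖_∞ ≤ c(t)² ‖φ‖_∞. -/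

import Mathlib

open MeasureTheory Filter Set
open scoped ENNReal Topology

noncomputable section

variable {d : ℕ}

private lemma aux_hasDerivAt {g : EuclideanSpace ℝ (Fin d) → ℝ} {v : EuclideanSpace ℝ (Fin d)}
    (hdiff : ∀ x, LineDifferentiableAt ℝ g x v) (a : EuclideanSpace ℝ (Fin d)) (s : ℝ) :
    HasDerivAt (fun u : ℝ => g (a + u • v)) (lineDeriv ℝ g (a + s • v) v) s := by
  have h0 : HasDerivAt (fun u : ℝ => g ((a + s • v) + u • v)) (lineDeriv ℝ g (a + s • v) v) 0 :=
    (hdiff (a + s • v)).hasLineDerivAt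
  have h1 : HasDerivAt (fun u : ℝ => u - s) 1 s := (hasDerivAt_id s).sub_const s
  have h0' : HasDerivAt (fun u : ℝ => g ((a + s • v) + u • v))
      (lineDeriv ℝ g (a + s • v) v) ((fun u : ℝ => u - s) s) := by simpa using h0
  have h2 := HasDerivAt.comp (h := fun u : ℝ => u - s) s h0' h1
  have hfun : (fun u : ℝ => g (a + u • v)) =
      (fun u : ℝ => g ((a + s • v) + u • v)) ∘ (fun u : ℝ => u - s) := by
    funext u
    simp only [Function.comp]
    congr 1
    module
  rw [hfun]
  simpa using h2

private lemma aux_lip {g : EuclideanSpace ℝ (Fin d) → ℝ} {v : EuclideanSpace ℝ (Fin d)} {C : ℝ}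
    (hdiff : ∀ x, LineDifferentiableAt ℝ g x v) (hbd : ∀ x, |lineDeriv ℝ g x v| ≤ C)
    (a : EuclideanSpace ℝ (Fin d)) (s₁ s₂ : ℝ) :
    |g (a + s₁ • v) - g (a + s₂ • v)| ≤ C * |s₁ - s₂| := by
  have := Convex.norm_image_sub_le_of_norm_hasDerivWithin_le (f := fun u : ℝ => g (a + u • v))
    (f' := fun u : ℝ => lineDeriv ℝ g (a + u • v) v) (s := (univ : Set ℝ)) (C := C)
    (fun u _ => (aux_hasDerivAt hdiff a u).hasDerivWithinAt)
    (fun u _ => by simpa [Real.norm_eq_abs] using hbd (a + u • v))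
    convex_univ (mem_univ s₂) (mem_univ s₁)
  simpa [Real.norm_eq_abs] using this

private lemma aux_meas_lineDeriv {g : EuclideanSpace ℝ (Fin d) → ℝ}
    {v : EuclideanSpace ℝ (Fin d)} (hg : Measurable g)
    (hdiff : ∀ x, LineDifferentiableAt ℝ g x v) :
    Measurable (fun x => lineDeriv ℝ g x v) := by
  have key : ∀ x, Tendsto (fun n : ℕ => (g (x + (((n : ℝ) + 1)⁻¹) • v) - g x) * ((n : ℝ) + 1))
      atTop (𝓝 (lineDeriv ℝ g x v)) := by
    intro x
    have h := (hdiff x).hasLineDerivAt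
    rw [HasLineDerivAt, hasDerivAt_iff_tendsto_slope] at h
    have hu : Tendsto (fun n : ℕ => ((n : ℝ) + 1)⁻¹) atTop (𝓝[≠] (0 : ℝ)) := by
      apply tendsto_nhdsWithin_of_tendsto_nhds_of_eventually_within
      · exact tendsto_one_div_add_atTop_nhds_zero_nat.congr (by intro n; rw [one_div])
      · filter_upwards with n
        simp only [mem_compl_iff, mem_singleton_iff]
        positivity
    have h2 := h.comp hu
    convert h2 with n
    have hne : ((n : ℝ) + 1) ≠ 0 := by positivity
    simp only [Function.comp, slope_def_field, zero_smul, add_zero, sub_zero, inv_inv]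
    rw [div_eq_mul_inv, inv_inv]
  refine measurable_of_tendsto_metrizable' (atTop : Filter ℕ)
    (f := fun (n : ℕ) x => (g (x + (((n : ℝ) + 1)⁻¹) • v) - g x) * ((n : ℝ) + 1))
    (fun n => (((hg.comp (measurable_add_const _)).sub hg).mul_const _)) ?_
  rw [tendsto_pi_nhds]
  exact key

/-- **Lemma 4.1(ii).** Let `(p_t)_{t ∈ (0,2T]}` be `C²` probability
densities on `ℝ^d` forming a convolution semigroup and `P_t φ(x) = ∫ φ(x+y) p_t(y) dy`.
If `‖∂_{x_i} P_t φ‖_∞ ≤ c(t) ‖φ‖_∞` for all `t ∈ (0,T]`, bounded measurable `φ` and all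
`i`, then `∂_{x_i} ∂_{x_k} P_{2t} φ` exists with
`‖∂_{x_i} ∂_{x_k} P_{2t} φ‖_∞ ≤ c(t)² ‖φ‖_∞`. -/
theorem semigroup_second_derivative_estimate
    {d : ℕ} (T : ℝ) (hT : 0 < T)
    (p : ℝ → EuclideanSpace ℝ (Fin d) → ℝ)
    (hp_reg : ∀ t ∈ Set.Ioc (0:ℝ) (2*T), ContDiff ℝ 2 (p t))
    (hp_nonneg : ∀ t ∈ Set.Ioc (0:ℝ) (2*T), ∀ x, 0 ≤ p t x)
    (hp_int : ∀ t ∈ Set.Ioc (0:ℝ) (2*T), Integrable (p t) volume)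
    (hp_one : ∀ t ∈ Set.Ioc (0:ℝ) (2*T), (∫ x, p t x) = 1)
    (hp_conv : ∀ s t : ℝ, 0 < s → 0 < t → s + t ≤ 2*T →
      ∀ x, p (s + t) x = ∫ y, p s (x - y) * p t y)
    (c : ℝ → ℝ) (hc : ∀ t ∈ Set.Ioc (0:ℝ) T, 0 ≤ c t)
    (h1 : ∀ t ∈ Set.Ioc (0:ℝ) T, ∀ φ : EuclideanSpace ℝ (Fin d) → ℝ, Measurable φ →
      (∃ M : ℝ, ∀ x, |φ x| ≤ M) → ∀ i : Fin d, ∀ x,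
        LineDifferentiableAt ℝ (fun z => ∫ y, φ (z + y) * p t y) x
          (EuclideanSpace.single i 1) ∧
        ∀ M : ℝ, (∀ z, |φ z| ≤ M) →
          |lineDeriv ℝ (fun z => ∫ y, φ (z + y) * p t y) x (EuclideanSpace.single i 1)|
            ≤ c t * M) :
    ∀ t ∈ Set.Ioc (0:ℝ) T, ∀ φ : EuclideanSpace ℝ (Fin d) → ℝ, Measurable φ →
      (∃ M : ℝ, ∀ x, |φ x| ≤ M) → ∀ i k : Fin d, ∀ x,
        LineDifferentiableAt ℝ (fun z => ∫ y, φ (z + y) * p (2*t) y) x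
          (EuclideanSpace.single k 1) ∧
        LineDifferentiableAt ℝ
          (fun z => lineDeriv ℝ (fun w => ∫ y, φ (w + y) * p (2*t) y) z
            (EuclideanSpace.single k 1)) x (EuclideanSpace.single i 1) ∧
        ∀ M : ℝ, (∀ z, |φ z| ≤ M) →
          |lineDeriv ℝ
              (fun z => lineDeriv ℝ (fun w => ∫ y, φ (w + y) * p (2*t) y) z
                (EuclideanSpace.single k 1)) x (EuclideanSpace.single i 1)|
            ≤ c t ^ 2 * M := by
  intro t ht φ hφm hφbd i k x
  obtain ⟨M₀, hM₀⟩ := hφbd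
  have hM₀0 : 0 ≤ M₀ := le_trans (abs_nonneg _) (hM₀ 0)
  have hct : 0 ≤ c t := hc t ht
  have htT' : t ∈ Set.Ioc (0:ℝ) (2*T) := ⟨ht.1, by linarith [ht.2]⟩
  have hpt_int := hp_int t htT'
  have hpt_nn := hp_nonneg t htT'
  have hpt_cont : Continuous (p t) := (hp_reg t htT').continuous
  set v : EuclideanSpace ℝ (Fin d) := EuclideanSpace.single k 1 with hv
  set g : EuclideanSpace ℝ (Fin d) → ℝ := fun z => ∫ y, φ (z + y) * p t y with hgdef
  -- measurability of g
  have hgmeas : Measurable g := by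
    have : StronglyMeasurable (fun q : EuclideanSpace ℝ (Fin d) × EuclideanSpace ℝ (Fin d) =>
        φ (q.1 + q.2) * p t q.2) :=
      ((hφm.comp measurable_add).mul
        (hpt_cont.measurable.comp measurable_snd)).stronglyMeasurable
    exact this.integral_prod_right'.measurable
  -- integrability of the integrand
  have hint : ∀ (ψ : EuclideanSpace ℝ (Fin d) → ℝ), Measurable ψ → ∀ (M : ℝ),
      (∀ z, |ψ z| ≤ M) → ∀ z, Integrable (fun y => ψ (z + y) * p t y) := by
    intro ψ hψ M hM z
    exact hpt_int.bdd_mul ((hψ.comp (measurable_const_add z)).aestronglyMeasurable)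
      (Filter.Eventually.of_forall fun y => by simpa [Real.norm_eq_abs] using hM (z + y))
  -- bound for integrals of the form ∫ ψ (z+y) p t y
  have hPbd : ∀ (ψ : EuclideanSpace ℝ (Fin d) → ℝ), Measurable ψ → ∀ (M : ℝ),
      (∀ z, |ψ z| ≤ M) → ∀ z, |∫ y, ψ (z + y) * p t y| ≤ M := by
    intro ψ hψ M hM z
    have h1' : |∫ y, ψ (z + y) * p t y| ≤ ∫ y, |ψ (z + y)| * |p t y| := by
      simpa [Real.norm_eq_abs] using
        norm_integral_le_integral_norm (μ := volume) (fun y => ψ (z + y) * p t y)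
    have h2' : (∫ y, |ψ (z + y)| * |p t y|) ≤ ∫ y, M * p t y := by
      apply integral_mono ?_ (hpt_int.const_mul M) ?_
      · have := (hint ψ hψ M hM z).abs
        exact this.congr (Filter.Eventually.of_forall fun y => by
          dsimp only; rw [abs_mul])
      · intro y
        dsimp only
        rw [abs_of_nonneg (hpt_nn y)]
        exact mul_le_mul_of_nonneg_right (hM (z + y)) (hpt_nn y)
    have h3' : (∫ y, M * p t y) = M := by
      rw [integral_const_mul, hp_one t htT', mul_one]
    linarith
  have hgbd : ∀ z, |g z| ≤ M₀ := hPbd φ hφm M₀ hM₀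
  -- key identity : P_{2t} φ = P_t g
  have hkey : ∀ z, (∫ y, φ (z + y) * p (2*t) y) = ∫ y, g (z + y) * p t y := by
    intro z
    have h2t : ∀ y, p (2*t) y = ∫ w, p t (y - w) * p t w := by
      intro y
      rw [show (2*t) = t + t by ring]
      exact hp_conv t t ht.1 ht.1 (by linarith [ht.2]) y
    have hFub : Integrable (Function.uncurry fun y w => φ (z + y) * (p t (y - w) * p t w))
        ((volume : Measure (EuclideanSpace ℝ (Fin d))).prod volume) := by
      have hconv : Integrable (fun q : EuclideanSpace ℝ (Fin d) × EuclideanSpace ℝ (Fin d) =>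
          p t q.2 * p t (q.1 - q.2))
          ((volume : Measure (EuclideanSpace ℝ (Fin d))).prod volume) :=
        hpt_int.convolution_integrand (ContinuousLinearMap.mul ℝ ℝ) hpt_int
      have hb : Integrable (fun q : EuclideanSpace ℝ (Fin d) × EuclideanSpace ℝ (Fin d) =>
          φ (z + q.1) * (p t q.2 * p t (q.1 - q.2)))
          ((volume : Measure (EuclideanSpace ℝ (Fin d))).prod volume) :=
        hconv.bdd_mul (((hφm.comp (measurable_const_add z)).comp
          measurable_fst).aestronglyMeasurable)
          (Filter.Eventually.of_forall fun q => by simpa [Real.norm_eq_abs] using hM₀ (z + q.1))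
      exact hb.congr (Filter.Eventually.of_forall fun q => by
        simp only [Function.uncurry]
        ring)
    calc (∫ y, φ (z + y) * p (2*t) y)
        = ∫ y, ∫ w, φ (z + y) * (p t (y - w) * p t w) := by
          congr 1; funext y
          rw [h2t y, integral_const_mul]
      _ = ∫ w, ∫ y, φ (z + y) * (p t (y - w) * p t w) := integral_integral_swap hFub
      _ = ∫ w, g (z + w) * p t w := by
          congr 1; funext w
          calc (∫ y, φ (z + y) * (p t (y - w) * p t w))
              = ∫ y, (φ (z + y) * p t (y - w)) * p t w := by
                congr 1; funext y; ring
            _ = (∫ y, φ (z + y) * p t (y - w)) * p t w := by rw [integral_mul_const]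
            _ = g (z + w) * p t w := by
                congr 1
                have := MeasureTheory.integral_add_right_eq_self
                  (μ := (volume : Measure (EuclideanSpace ℝ (Fin d))))
                  (fun y => φ (z + y) * p t (y - w)) w
                rw [← this]
                congr 1; funext y
                simp only [add_sub_cancel_right]
                congr 2
                abel
  -- line differentiability/bounds for g from h1
  have hgdiff : ∀ w, LineDifferentiableAt ℝ g w v :=
    fun w => (h1 t ht φ hφm ⟨M₀, hM₀⟩ k w).1
  have hψbd : ∀ (M : ℝ), (∀ z, |φ z| ≤ M) → ∀ w, |lineDeriv ℝ g w v| ≤ c t * M :=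
    fun M hM w => (h1 t ht φ hφm ⟨M₀, hM₀⟩ k w).2 M hM
  set ψ : EuclideanSpace ℝ (Fin d) → ℝ := fun w => lineDeriv ℝ g w v with hψdef
  have hψmeas : Measurable ψ := aux_meas_lineDeriv hgmeas hgdiff
  -- interchange derivative and integral
  have hF : ∀ z, HasLineDerivAt ℝ (fun w => ∫ y, g (w + y) * p t y)
      (∫ y, ψ (z + y) * p t y) z v := by
    intro z
    have main := hasDerivAt_integral_of_dominated_loc_of_lip
      (F := fun (s : ℝ) (y : EuclideanSpace ℝ (Fin d)) => g (z + s • v + y) * p t y)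
      (F' := fun y => ψ (z + y) * p t y) (x₀ := (0:ℝ))
      (bound := fun y => (c t * M₀) * p t y) (s := Metric.ball (0:ℝ) 1) (Metric.ball_mem_nhds 0 one_pos)
      (Filter.Eventually.of_forall fun s =>
        ((hgmeas.comp (measurable_const_add _)).mul hpt_cont.measurable).aestronglyMeasurable)
      (by
        have := hint g hgmeas M₀ hgbd (z + (0:ℝ) • v)
        exact this.congr (Filter.Eventually.of_forall fun y => by
          simp only []))
      (((hψmeas.comp (measurable_const_add z)).mul
        hpt_cont.measurable).aestronglyMeasurable)
      (Filter.Eventually.of_forall ?_)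
      ((hpt_int.const_mul _))
      (Filter.Eventually.of_forall ?_)
    · exact main.2
    · -- Lipschitz
      intro y
      apply LipschitzOnWith.of_dist_le_mul
      intro s₁ _ s₂ _
      have hlp := aux_lip hgdiff (hψbd M₀ hM₀) (z + y) s₁ s₂
      have harr : ∀ s : ℝ, z + s • v + y = (z + y) + s • v := by intro s; abel
      rw [Real.dist_eq, Real.dist_eq]
      have : g (z + s₁ • v + y) * p t y - g (z + s₂ • v + y) * p t y
          = (g ((z + y) + s₁ • v) - g ((z + y) + s₂ • v)) * p t y := by
        rw [harr s₁, harr s₂]; ring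
      rw [this, abs_mul, abs_of_nonneg (hpt_nn y)]
      have hcoe : ((Real.nnabs ((c t * M₀) * p t y)) : ℝ) = (c t * M₀) * p t y := by
        rw [Real.coe_nnabs, abs_of_nonneg (mul_nonneg (mul_nonneg hct hM₀0) (hpt_nn y))]
      rw [hcoe]
      calc |g ((z + y) + s₁ • v) - g ((z + y) + s₂ • v)| * p t y
          ≤ ((c t * M₀) * |s₁ - s₂|) * p t y :=
            mul_le_mul_of_nonneg_right hlp (hpt_nn y)
        _ = (c t * M₀) * p t y * |s₁ - s₂| := by ring
    · -- pointwise derivative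
      intro y
      have h0 : HasDerivAt (fun s : ℝ => g ((z + y) + s • v)) (ψ (z + y)) 0 :=
        (hgdiff (z + y)).hasLineDerivAt
      have harr : ∀ s : ℝ, z + s • v + y = (z + y) + s • v := by intro s; abel
      have h0' : HasDerivAt (fun s : ℝ => g (z + s • v + y)) (ψ (z + y)) 0 := by
        convert h0 using 2 with s
        rw [harr]
      simpa using h0'.mul_const (p t y)
  have hFg : (fun z => ∫ y, φ (z + y) * p (2*t) y)
      = (fun w => ∫ y, g (w + y) * p t y) := funext hkey
  have hld : (fun z => lineDeriv ℝ (fun w => ∫ y, φ (w + y) * p (2*t) y) z v)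
      = fun z => ∫ y, ψ (z + y) * p t y := by
    funext z
    rw [hFg]
    exact (hF z).lineDeriv
  have happ := h1 t ht ψ hψmeas ⟨c t * M₀, hψbd M₀ hM₀⟩ i
  refine ⟨?_, ?_, ?_⟩
  · rw [hFg]
    exact (hF x).lineDifferentiableAt
  · rw [hld]
    exact (happ x).1
  · intro M hM
    rw [hld]
    have := (happ x).2 (c t * M) (hψbd M hM)
    calc |lineDeriv ℝ (fun z => ∫ y, ψ (z + y) * p t y) x (EuclideanSpace.single i 1)|
        ≤ c t * (c t * M) := this
      _ = c t ^ 2 * M := by ring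

end
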